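/- (Lemma 1) For T > 0 define the cumulative adsorbed fraction R(T) = 2 r_r D · [∫₀^∞ ((1 − e^{−iwT})/(iw))·conj(ψ(w)) dw + ∫₀^∞ ((e^{iwT} − 1)/(iw))·ψ(w) dw]. Assume (i) w ↦ Im(ψ(w))/w is Lebesgue integrable on (0,∞); (ii) ψ extends continuously to w = 0 with ψ(0) = 1/(4π r_0 D); and (iii) as T → ∞, ∫₀^∞ (sin z / z)·Re(ψ(z/T)) dz → (π/2)·(1/(4π r_0 D)) and ∫₀^∞ (cos z / z)·Im(ψ(z/T)) dz → 0. Then for any N_tx ∈ ℕ, N_tx·R(T) converges as T → ∞ to N_tx·r_r/(2 r_0) − 4 N_tx r_r D ∫₀^∞ Im(ψ(w))/w dw. -/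

import Mathlib

open MeasureTheory Filter

/-- `β(s) = 1/r_r + k₁ s/(D(s + k₋₁))`. -/
noncomputable def betaMC (D rr k1 km1 : ℝ) (z : ℂ) : ℂ :=
  1 / (rr : ℂ) + (k1 : ℂ) * z / ((D : ℂ) * (z + (km1 : ℂ)))

/-- `ψ(w) = (β(iw)/(β(iw)+√(iw/D))) e^{−(r₀−r_r)√(iw/D)} / (4π r₀ D)`. -/
noncomputable def psiMC (D rr r0 k1 km1 : ℝ) (w : ℝ) : ℂ :=
  (betaMC D rr k1 km1 (Complex.I * (w : ℂ)) /
      (betaMC D rr k1 km1 (Complex.I * (w : ℂ)) +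
        (Complex.I * (w : ℂ) / (D : ℂ)) ^ ((1 : ℂ) / 2))) *
    Complex.exp (-((r0 : ℂ) - (rr : ℂ)) * (Complex.I * (w : ℂ) / (D : ℂ)) ^ ((1 : ℂ) / 2)) /
    (4 * (Real.pi : ℂ) * (r0 : ℂ) * (D : ℂ))

/-- Cumulative adsorbed fraction
`R(T) = 2 r_r D [∫₀^∞ ((1−e^{−iwT})/(iw)) conj(ψ(w)) dw
              + ∫₀^∞ ((e^{iwT}−1)/(iw)) ψ(w) dw]`. -/
noncomputable def Rad (D rr r0 k1 km1 : ℝ) (T : ℝ) : ℂ :=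
  ((2 * rr * D : ℝ) : ℂ) *
    ((∫ w in Set.Ioi (0 : ℝ),
        ((1 - Complex.exp (-(Complex.I * (w : ℂ) * (T : ℂ)))) / (Complex.I * (w : ℂ))) *
          (starRingEnd ℂ) (psiMC D rr r0 k1 km1 w)) +
      ∫ w in Set.Ioi (0 : ℝ),
        ((Complex.exp (Complex.I * (w : ℂ) * (T : ℂ)) - 1) / (Complex.I * (w : ℂ))) *
          psiMC D rr r0 k1 km1 w)

open MeasureTheory Filter Set Complex in
lemma sqrtIw {D w : ℝ} (hD : 0 < D) (hw : 0 < w) :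
    (Complex.I * (w : ℂ) / (D : ℂ)) ^ ((1 : ℂ) / 2)
      = (Real.sqrt (w / (2 * D)) : ℂ) * (1 + Complex.I) := by
  have hr : (0:ℝ) < w / D := div_pos hw hD
  have hz : Complex.I * (w:ℂ) / (D:ℂ) = ((w/D : ℝ) : ℂ) * Complex.I := by
    push_cast; field_simp
  have hlog : Complex.log (((w/D : ℝ) : ℂ) * Complex.I)
      = (Real.log (w/D) : ℂ) + (Real.pi/2 : ℝ) * Complex.I := by
    rw [Complex.log]
    have harg : (((w/D : ℝ) : ℂ) * Complex.I).arg = Real.pi / 2 := by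
      rw [Complex.arg_real_mul _ hr, Complex.arg_I]
    have habs : ‖(((w/D : ℝ) : ℂ) * Complex.I)‖ = w / D := by
      rw [norm_mul, Complex.norm_I, mul_one, Complex.norm_real, Real.norm_eq_abs, abs_of_pos hr]
    rw [harg, habs]
  have hne : ((w/D : ℝ) : ℂ) * Complex.I ≠ 0 := by
    simp [Complex.ext_iff, hw.ne', hD.ne']
  rw [hz, Complex.cpow_def_of_ne_zero hne, hlog]
  have harg2 : ((Real.log (w/D) : ℂ) + (Real.pi/2 : ℝ) * Complex.I) * (1/2)
      = (Real.log (w/D)/2 : ℝ) + ((Real.pi/4 : ℝ) : ℂ) * Complex.I := by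
    push_cast; ring
  rw [harg2, Complex.exp_add, Complex.exp_mul_I]
  have h1 : Complex.exp ((Real.log (w/D)/2 : ℝ) : ℂ) = (Real.sqrt (w/D) : ℂ) := by
    rw [← Complex.ofReal_exp]
    congr 1
    rw [Real.sqrt_eq_rpow, Real.rpow_def_of_pos hr]
    ring_nf
  have h2 : Complex.cos ((Real.pi/4 : ℝ) : ℂ) = ((Real.sqrt 2 / 2 : ℝ) : ℂ) := by
    rw [← Complex.ofReal_cos]
    norm_num [Real.cos_pi_div_four]
  have h3 : Complex.sin ((Real.pi/4 : ℝ) : ℂ) = ((Real.sqrt 2 / 2 : ℝ) : ℂ) := by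
    rw [← Complex.ofReal_sin]
    norm_num [Real.sin_pi_div_four]
  rw [h1, h2, h3]
  have h4 : Real.sqrt (w/(2*D)) = Real.sqrt (w/D) * (Real.sqrt 2 / 2) := by
    rw [show w/(2*D) = (w/D) * (1/2) by ring, Real.sqrt_mul hr.le]
    have hs2 : Real.sqrt 2 * Real.sqrt 2 = 2 := Real.mul_self_sqrt (by norm_num)
    have : Real.sqrt (1/2) = Real.sqrt 2 / 2 := by
      rw [one_div, Real.sqrt_inv, eq_div_iff (by norm_num : (2:ℝ) ≠ 0)]
      field_simp
      rw [Real.sq_sqrt (by norm_num : (0:ℝ) ≤ 2)]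
    rw [this]
  rw [h4]
  push_cast
  ring

open MeasureTheory Filter Set Complex in
lemma beta_re_pos {D rr k1 km1 w : ℝ} (hD : 0 < D) (hrr : 0 < rr) (hk1 : 0 ≤ k1) (hw : 0 < w) :
    0 < (betaMC D rr k1 km1 (Complex.I * (w : ℂ))).re := by
  simp [betaMC, Complex.div_re, Complex.normSq_apply]
  ring_nf
  positivity

open MeasureTheory Filter Set Complex in
lemma beta_im_nonneg {D rr k1 km1 w : ℝ} (hD : 0 < D) (hrr : 0 < rr) (hk1 : 0 ≤ k1)
    (hkm1 : 0 ≤ km1) (hw : 0 < w) :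
    0 ≤ (betaMC D rr k1 km1 (Complex.I * (w : ℂ))).im := by
  simp [betaMC, Complex.div_im, Complex.normSq_apply]
  ring_nf
  positivity

open MeasureTheory Filter Set Complex in
lemma denom_ne_zero {D rr k1 km1 w : ℝ} (hD : 0 < D) (hrr : 0 < rr) (hk1 : 0 ≤ k1) (hw : 0 < w) :
    betaMC D rr k1 km1 (Complex.I * (w : ℂ)) +
      (Complex.I * (w : ℂ) / (D : ℂ)) ^ ((1 : ℂ) / 2) ≠ 0 := by
  intro h
  have hre : (betaMC D rr k1 km1 (Complex.I * (w : ℂ)) +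
      (Complex.I * (w : ℂ) / (D : ℂ)) ^ ((1 : ℂ) / 2)).re = 0 := by rw [h]; simp
  rw [sqrtIw hD hw] at hre
  have h1 : ((Real.sqrt (w / (2 * D)) : ℂ) * (1 + Complex.I)).re = Real.sqrt (w / (2 * D)) := by
    simp
  rw [Complex.add_re, h1] at hre
  have := beta_re_pos (rr := rr) (k1 := k1) (km1 := km1) hD hrr hk1 hw
  nlinarith [Real.sqrt_nonneg (w / (2 * D))]

open MeasureTheory Filter Set Complex in
lemma psi_norm_le {D rr r0 k1 km1 : ℝ} (hD : 0 < D) (hrr : 0 < rr) (hr0 : rr < r0)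
    (hk1 : 0 ≤ k1) (hkm1 : 0 ≤ km1) {w : ℝ} (hw : 0 < w) :
    ‖psiMC D rr r0 k1 km1 w‖ ≤
      1 / (4 * Real.pi * r0 * D) * Real.exp (-((r0 - rr) * Real.sqrt (w / (2 * D)))) := by
  have hr0' : 0 < r0 := hrr.trans hr0
  set s := Real.sqrt (w / (2 * D)) with hs
  have hs0 : 0 ≤ s := Real.sqrt_nonneg _
  set β := betaMC D rr k1 km1 (Complex.I * (w : ℂ)) with hβ
  have hβre := beta_re_pos (rr := rr) (k1 := k1) (km1 := km1) hD hrr hk1 hw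
  have hβim := beta_im_nonneg (rr := rr) (k1 := k1) (km1 := km1) hD hrr hk1 hkm1 hw
  have hc : (0:ℝ) < 4 * Real.pi * r0 * D := by positivity
  unfold psiMC
  rw [sqrtIw hD hw]
  set σ : ℂ := (s : ℂ) * (1 + Complex.I) with hσ
  have hσre : σ.re = s := by simp [hσ]
  have hden : β + σ ≠ 0 := by
    rw [hσ, ← sqrtIw hD hw]; exact denom_ne_zero hD hrr hk1 hw
  have hnormc : ‖(4 * (Real.pi : ℂ) * (r0 : ℂ) * (D : ℂ))‖ = 4 * Real.pi * r0 * D := by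
    rw [show (4 * (Real.pi : ℂ) * (r0 : ℂ) * (D : ℂ)) = ((4 * Real.pi * r0 * D : ℝ) : ℂ) by
      push_cast; ring]
    rw [Complex.norm_real, Real.norm_eq_abs, abs_of_pos hc]
  have hq : ‖β / (β + σ)‖ ≤ 1 := by
    rw [norm_div, div_le_one (norm_pos_iff.2 hden)]
    have hre : 0 ≤ (β * (starRingEnd ℂ) σ).re := by
      have hconj : (starRingEnd ℂ) σ = (s : ℂ) * (1 - Complex.I) := by
        rw [hσ]; simp; left; ring
      rw [hconj]
      have : (β * ((s : ℂ) * (1 - Complex.I))).re = s * (β.re + β.im) := by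
        simp [Complex.mul_re, Complex.mul_im]
        ring
      rw [this]
      have : (0:ℝ) ≤ β.re + β.im := by
        have h1 : β.re = (betaMC D rr k1 km1 (Complex.I * (w : ℂ))).re := by rw [hβ]
        have h2 : β.im = (betaMC D rr k1 km1 (Complex.I * (w : ℂ))).im := by rw [hβ]
        rw [h1, h2]; linarith
      exact mul_nonneg hs0 this
    have h2 : Complex.normSq β ≤ Complex.normSq (β + σ) := by
      rw [Complex.normSq_add]
      nlinarith [Complex.normSq_nonneg σ]
    rw [Complex.norm_def, Complex.norm_def]
    exact Real.sqrt_le_sqrt h2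
  have hexp : ‖Complex.exp (-((r0 : ℂ) - (rr : ℂ)) * σ)‖
      = Real.exp (-((r0 - rr) * s)) := by
    rw [Complex.norm_exp]
    congr 1
    rw [show -((r0 : ℂ) - (rr : ℂ)) * σ = ((-((r0 - rr) * s) : ℝ) : ℂ)
        + ((-((r0 - rr) * s) : ℝ) : ℂ) * Complex.I by rw [hσ]; push_cast; ring]
    simp
  calc ‖β / (β + σ) * Complex.exp (-((r0 : ℂ) - (rr : ℂ)) * σ) /
      (4 * (Real.pi : ℂ) * (r0 : ℂ) * (D : ℂ))‖
      = ‖β / (β + σ)‖ * ‖Complex.exp (-((r0 : ℂ) - (rr : ℂ)) * σ)‖ / (4 * Real.pi * r0 * D) := by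
        rw [norm_div, norm_mul, hnormc]
    _ ≤ 1 * Real.exp (-((r0 - rr) * s)) / (4 * Real.pi * r0 * D) := by
        rw [hexp]; gcongr
    _ = 1 / (4 * Real.pi * r0 * D) * Real.exp (-((r0 - rr) * s)) := by ring

open MeasureTheory Filter Set Complex in
lemma psi_contOn {D rr r0 k1 km1 : ℝ} (hD : 0 < D) (hrr : 0 < rr) (hr0 : rr < r0)
    (hk1 : 0 ≤ k1) : ContinuousOn (psiMC D rr r0 k1 km1) (Set.Ioi 0) := by
  intro w hw
  have hw' : (0:ℝ) < w := hw
  have hcw : ContinuousAt (psiMC D rr r0 k1 km1) w := by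
    have hIw : ContinuousAt (fun v : ℝ => Complex.I * (v : ℂ)) w :=
      (Complex.continuous_ofReal.continuousAt).const_mul _
    have hsqrt : ContinuousAt
        (fun v : ℝ => (Complex.I * (v : ℂ) / (D : ℂ)) ^ ((1 : ℂ) / 2)) w := by
      apply ContinuousAt.comp (g := fun z : ℂ => z ^ ((1:ℂ)/2))
        (f := fun v : ℝ => Complex.I * (v : ℂ) / (D : ℂ))
      · apply continuousAt_cpow_const
        rw [Complex.mem_slitPlane_iff]
        right
        have : (Complex.I * (w : ℂ) / (D : ℂ)).im = w / D := by
          rw [show Complex.I * (w : ℂ) / (D : ℂ) = ((w / D : ℝ) : ℂ) * Complex.I by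
            push_cast; field_simp]
          simp
        rw [this]
        positivity
      · exact (hIw.div continuousAt_const (by exact_mod_cast hD.ne'))
    have hbeta : ContinuousAt (fun v : ℝ => betaMC D rr k1 km1 (Complex.I * (v : ℂ))) w := by
      unfold betaMC
      apply ContinuousAt.add continuousAt_const
      apply ContinuousAt.div
      · exact continuousAt_const.mul hIw
      · exact continuousAt_const.mul (hIw.add continuousAt_const)
      · intro h
        have him : ((D : ℂ) * (Complex.I * (w : ℂ) + (km1 : ℂ))).im = D * w := by simp
        rw [h] at him
        simp at him
        rcases him with h1 | h2
        · exact hD.ne' h1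
        · exact hw'.ne' h2
    unfold psiMC
    apply ContinuousAt.div
    · apply ContinuousAt.mul
      · exact hbeta.div (hbeta.add hsqrt) (denom_ne_zero hD hrr hk1 hw')
      · exact Complex.continuous_exp.continuousAt.comp (continuousAt_const.mul hsqrt)
    · exact continuousAt_const
    · have hr0' : 0 < r0 := hrr.trans hr0
      rw [show (4 * (Real.pi:ℂ) * (r0:ℂ) * (D:ℂ)) = ((4 * Real.pi * r0 * D : ℝ) : ℂ) by
        push_cast; ring]
      exact_mod_cast (by positivity : (0:ℝ) < 4 * Real.pi * r0 * D).ne'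
  exact hcw.continuousWithinAt

open MeasureTheory Filter Set Complex in
lemma exp_neg_le_inv_pow {x : ℝ} (hx : 0 < x) : Real.exp (-x) ≤ 256 / x ^ 4 := by
  have h1 : x / 4 ≤ Real.exp (x / 4) := by linarith [Real.add_one_le_exp (x / 4)]
  have h2 : (x / 4) ^ 4 ≤ (Real.exp (x / 4)) ^ 4 := pow_le_pow_left₀ (by positivity) h1 4
  have h3 : (Real.exp (x / 4)) ^ 4 = Real.exp x := by
    rw [← Real.exp_nat_mul]; norm_num; ring_nf
  have h4 : x ^ 4 / 256 ≤ Real.exp x := by nlinarith [h2, h3]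
  calc Real.exp (-x) = (Real.exp x)⁻¹ := Real.exp_neg x
    _ ≤ (x ^ 4 / 256)⁻¹ := by
        apply inv_anti₀ (by positivity) h4
    _ = 256 / x ^ 4 := by field_simp

open MeasureTheory Filter Set Complex in
lemma frac_norm_le_T {w T : ℝ} (hw : 0 < w) (hT : 0 ≤ T) :
    ‖(Complex.exp (Complex.I * (w : ℂ) * (T : ℂ)) - 1) / (Complex.I * (w : ℂ))‖ ≤ T := by
  have hc : (Complex.I * (w : ℂ)) ≠ 0 := by
    simp [Complex.ext_iff, hw.ne']
  have key : (Complex.exp (Complex.I * (w : ℂ) * (T : ℂ)) - 1) / (Complex.I * (w : ℂ))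
      = ∫ t in (0:ℝ)..T, Complex.exp ((Complex.I * (w : ℂ)) * (t : ℂ)) := by
    rw [integral_exp_mul_complex hc]
    simp
  rw [key]
  have := intervalIntegral.norm_integral_le_of_norm_le_const
    (a := (0:ℝ)) (b := T) (C := 1)
    (f := fun t : ℝ => Complex.exp ((Complex.I * (w : ℂ)) * (t : ℂ)))
    (fun t _ => by
      rw [Complex.norm_exp]
      simp)
  simpa [_root_.abs_of_nonneg hT] using this

open MeasureTheory Filter Set Complex in
lemma frac_norm_le_two {w T : ℝ} (hw : 0 < w) :
    ‖(Complex.exp (Complex.I * (w : ℂ) * (T : ℂ)) - 1) / (Complex.I * (w : ℂ))‖ ≤ 2 / w := by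
  rw [norm_div]
  have h1 : ‖Complex.exp (Complex.I * (w : ℂ) * (T : ℂ)) - 1‖ ≤ 2 := by
    calc ‖Complex.exp (Complex.I * (w : ℂ) * (T : ℂ)) - 1‖
        ≤ ‖Complex.exp (Complex.I * (w : ℂ) * (T : ℂ))‖ + ‖(1:ℂ)‖ := norm_sub_le _ _
      _ ≤ 2 := by
          rw [Complex.norm_exp]
          simp
          norm_num
  have h2 : ‖Complex.I * (w : ℂ)‖ = w := by
    simp [abs_of_pos hw]
  rw [h2]
  gcongr

open MeasureTheory Filter Set Complex in
lemma g_integrable {D rr r0 k1 km1 : ℝ} (hD : 0 < D) (hrr : 0 < rr) (hr0 : rr < r0)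
    (hk1 : 0 ≤ k1) (hkm1 : 0 ≤ km1) {T : ℝ} (hT : 0 ≤ T) :
    IntegrableOn (fun w : ℝ =>
      ((Complex.exp (Complex.I * (w : ℂ) * (T : ℂ)) - 1) / (Complex.I * (w : ℂ))) *
        psiMC D rr r0 k1 km1 w) (Set.Ioi 0) := by
  have hr0' : 0 < r0 := hrr.trans hr0
  set C : ℝ := 1 / (4 * Real.pi * r0 * D) with hC
  have hCpos : 0 < C := by rw [hC]; positivity
  set c : ℝ := r0 - rr with hc
  have hcpos : 0 < c := by rw [hc]; linarith
  have hgcont : ContinuousOn (fun w : ℝ =>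
      ((Complex.exp (Complex.I * (w : ℂ) * (T : ℂ)) - 1) / (Complex.I * (w : ℂ))) *
        psiMC D rr r0 k1 km1 w) (Set.Ioi 0) := by
    apply ContinuousOn.mul _ (psi_contOn hD hrr hr0 hk1)
    apply ContinuousOn.div
    · exact (Complex.continuous_exp.comp
        ((continuous_const.mul Complex.continuous_ofReal).mul
          continuous_const)).continuousOn.sub continuousOn_const
    · exact (continuous_const.mul Complex.continuous_ofReal).continuousOn
    · intro w hw
      simp [Complex.ext_iff, (show (0:ℝ) < w from hw).ne']
  have hpsiC : ∀ w : ℝ, 0 < w → ‖psiMC D rr r0 k1 km1 w‖ ≤ C := by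
    intro w hw
    refine (psi_norm_le hD hrr hr0 hk1 hkm1 hw).trans ?_
    rw [← hC, ← hc]
    have h8 : Real.exp (-(c * Real.sqrt (w / (2*D)))) ≤ 1 :=
      Real.exp_le_one_iff.2 (neg_nonpos.2 (by positivity))
    nlinarith [h8, hCpos]
  have pieceA : IntegrableOn (fun w : ℝ =>
      ((Complex.exp (Complex.I * (w : ℂ) * (T : ℂ)) - 1) / (Complex.I * (w : ℂ))) *
        psiMC D rr r0 k1 km1 w) (Set.Ioc 0 1) := by
    apply Integrable.mono' (g := fun _ : ℝ => T * C)
      (integrableOn_const measure_Ioc_lt_top.ne)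
      ((hgcont.mono Set.Ioc_subset_Ioi_self).aestronglyMeasurable measurableSet_Ioc)
    rw [ae_restrict_iff' measurableSet_Ioc]
    filter_upwards with w hw
    rw [norm_mul]
    exact mul_le_mul (frac_norm_le_T hw.1 hT) (hpsiC w hw.1) (norm_nonneg _) hT
  have pieceB : IntegrableOn (fun w : ℝ =>
      ((Complex.exp (Complex.I * (w : ℂ) * (T : ℂ)) - 1) / (Complex.I * (w : ℂ))) *
        psiMC D rr r0 k1 km1 w) (Set.Ioi 1) := by
    set K : ℝ := 2 * C * 1024 * D ^ 2 / c ^ 4 with hK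
    apply Integrable.mono' (g := fun w : ℝ => K * w ^ (-2 : ℝ))
      (((integrableOn_Ioi_rpow_iff one_pos).2 (by norm_num)).const_mul K)
      ((hgcont.mono (Set.Ioi_subset_Ioi zero_le_one)).aestronglyMeasurable measurableSet_Ioi)
    rw [ae_restrict_iff' measurableSet_Ioi]
    filter_upwards with w hw
    have hw1 : (1:ℝ) < w := hw
    have hw0 : (0:ℝ) < w := lt_trans one_pos hw1
    have hsq : 0 < Real.sqrt (w / (2 * D)) := Real.sqrt_pos.2 (by positivity)
    have hb1 : ‖psiMC D rr r0 k1 km1 w‖ ≤ C * (1024 * D^2 / (c^4 * w^2)) := by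
      refine (psi_norm_le hD hrr hr0 hk1 hkm1 hw0).trans ?_
      rw [← hC, ← hc]
      have h5 := exp_neg_le_inv_pow (x := c * Real.sqrt (w / (2 * D))) (by positivity)
      have hss := Real.sq_sqrt (show (0:ℝ) ≤ w / (2 * D) by positivity)
      have h6 : (c * Real.sqrt (w / (2 * D))) ^ 4 = c ^ 4 * (w / (2 * D)) ^ 2 := by
        calc (c * Real.sqrt (w / (2 * D))) ^ 4
            = c ^ 4 * (Real.sqrt (w / (2 * D)) ^ 2) ^ 2 := by ring
          _ = c ^ 4 * (w / (2 * D)) ^ 2 := by rw [hss]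
      have h7 : 256 / (c * Real.sqrt (w / (2 * D))) ^ 4 = 1024 * D^2 / (c^4 * w^2) := by
        rw [h6]
        field_simp
        ring
      calc C * Real.exp (-(c * Real.sqrt (w / (2 * D))))
          ≤ C * (256 / (c * Real.sqrt (w / (2 * D))) ^ 4) := by gcongr
        _ = C * (1024 * D^2 / (c^4 * w^2)) := by rw [h7]
    rw [norm_mul]
    have hrp : w ^ (-2 : ℝ) = (w ^ 2)⁻¹ := by
      rw [Real.rpow_neg hw0.le, show ((2:ℝ)) = ((2:ℕ):ℝ) by norm_num, Real.rpow_natCast]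
    calc ‖(Complex.exp (Complex.I * (w : ℂ) * (T : ℂ)) - 1) / (Complex.I * (w : ℂ))‖ *
          ‖psiMC D rr r0 k1 km1 w‖
        ≤ (2 / w) * (C * (1024 * D^2 / (c^4 * w^2))) :=
          mul_le_mul (frac_norm_le_two hw0) hb1 (norm_nonneg _) (by positivity)
      _ ≤ 2 * (C * (1024 * D^2 / (c^4 * w^2))) := by
          have h9 : 2 / w ≤ 2 := by rw [div_le_iff₀ hw0]; nlinarith
          exact mul_le_mul_of_nonneg_right h9 (by positivity)
      _ = K * w ^ (-2 : ℝ) := by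
          rw [hrp, hK]
          field_simp
  have : Set.Ioi (0:ℝ) = Set.Ioc 0 1 ∪ Set.Ioi 1 := (Set.Ioc_union_Ioi_eq_Ioi zero_le_one).symm
  rw [this]
  exact pieceA.union pieceB

open MeasureTheory Filter Set Complex in
lemma re_g_eq {w T : ℝ} (hw : w ≠ 0) (z : ℂ) :
    (((Complex.exp (Complex.I * (w:ℂ) * (T:ℂ)) - 1) / (Complex.I * (w:ℂ))) * z).re
      = Real.sin (T*w)/w * z.re + Real.cos (T*w)/w * z.im - z.im/w := by
  have hne : (Complex.I * (w:ℂ)) ≠ 0 := by simp [Complex.ext_iff, hw]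
  have hfrac : (Complex.exp (Complex.I * (w:ℂ) * (T:ℂ)) - 1) / (Complex.I * (w:ℂ))
      = ((Real.sin (T*w)/w : ℝ) : ℂ) + ((( 1 - Real.cos (T*w))/w : ℝ) : ℂ) * Complex.I := by
    rw [div_eq_iff hne, show Complex.I * (w:ℂ) * (T:ℂ) = ((T*w : ℝ):ℂ) * Complex.I by
      push_cast; ring, Complex.exp_mul_I, ← Complex.ofReal_cos, ← Complex.ofReal_sin]
    simp only [Complex.ext_iff, Complex.add_re, Complex.add_im, Complex.mul_re, Complex.mul_im,
      Complex.sub_re, Complex.sub_im, Complex.I_re, Complex.I_im, Complex.ofReal_re,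
      Complex.ofReal_im, Complex.one_re, Complex.one_im]
    constructor <;> field_simp <;> ring
  rw [hfrac]
  simp only [Complex.add_re, Complex.mul_re, Complex.mul_im, Complex.add_im, Complex.I_re,
    Complex.I_im, Complex.ofReal_re, Complex.ofReal_im, Complex.sub_re, Complex.sub_im]
  field_simp
  ring

open Set Complex in
/-- (Lemma 1) The expected cumulative number of adsorbed molecules `N_tx·R(T)` of the
reversible adsorption–desorption receiver converges, as `T → ∞`, to
`N_tx r_r/(2r₀) − 4 N_tx r_r D ∫₀^∞ Im(ψ(w))/w dw`. -/
theorem lemma1_equilibrium (D rr r0 k1 km1 : ℝ)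
    (hD : 0 < D) (hrr : 0 < rr) (hr0 : rr < r0) (hk1 : 0 ≤ k1) (hkm1 : 0 ≤ km1)
    (Ntx : ℕ)
    (h1 : IntegrableOn (fun w : ℝ => (psiMC D rr r0 k1 km1 w).im / w) (Set.Ioi 0))
    (h2cont : ContinuousWithinAt (psiMC D rr r0 k1 km1) (Set.Ici 0) 0)
    (h2val : psiMC D rr r0 k1 km1 0 = 1 / (4 * Real.pi * r0 * D))
    (h3sin : Tendsto (fun T : ℝ =>
        ∫ z in Set.Ioi (0 : ℝ), (Real.sin z / z) * (psiMC D rr r0 k1 km1 (z / T)).re)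
      atTop (nhds (Real.pi / 2 * (1 / (4 * Real.pi * r0 * D)))))
    (h3cos : Tendsto (fun T : ℝ =>
        ∫ z in Set.Ioi (0 : ℝ), (Real.cos z / z) * (psiMC D rr r0 k1 km1 (z / T)).im)
      atTop (nhds 0)) :
    Tendsto (fun T : ℝ => (Ntx : ℂ) * Rad D rr r0 k1 km1 T) atTop
      (nhds ((((Ntx : ℝ) * rr / (2 * r0) : ℝ) : ℂ) -
        (((4 * (Ntx : ℝ) * rr * D *
            ∫ w in Set.Ioi (0 : ℝ), (psiMC D rr r0 k1 km1 w).im / w : ℝ)) : ℂ))) := by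
  have hr0' : 0 < r0 := hrr.trans hr0
  set ψ := psiMC D rr r0 k1 km1 with hψ
  set Cint : ℝ := ∫ w in Set.Ioi (0:ℝ), (ψ w).im / w with hCint
  set A : ℝ → ℝ := fun T => ∫ z in Set.Ioi (0:ℝ), (Real.sin z / z) * (ψ (z/T)).re with hA
  set B : ℝ → ℝ := fun T => ∫ z in Set.Ioi (0:ℝ), (Real.cos z / z) * (ψ (z/T)).im with hB
  -- the key identity
  have key : ∀ T : ℝ, 0 < T → Rad D rr r0 k1 km1 T
      = ((4 * rr * D : ℝ) : ℂ) * ((A T + B T - Cint : ℝ) : ℂ) := by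
    intro T hT
    set g : ℝ → ℂ := fun w =>
      ((Complex.exp (Complex.I * (w:ℂ) * (T:ℂ)) - 1) / (Complex.I * (w:ℂ))) * ψ w with hg
    have hgint : IntegrableOn g (Set.Ioi 0) := g_integrable hD hrr hr0 hk1 hkm1 hT.le
    -- first integral is the conjugate of the second
    have hconj : (∫ w in Set.Ioi (0:ℝ),
        ((1 - Complex.exp (-(Complex.I * (w : ℂ) * (T : ℂ)))) / (Complex.I * (w : ℂ))) *
          (starRingEnd ℂ) (ψ w)) = (starRingEnd ℂ) (∫ w in Set.Ioi (0:ℝ), g w) := by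
      rw [← integral_conj]
      apply setIntegral_congr_fun measurableSet_Ioi
      intro w hwm
      have hw0 : (0:ℝ) < w := hwm
      have hIw : (Complex.I * (w:ℂ)) ≠ 0 := by
        simp [Complex.ext_iff, hw0.ne']
      have hIw' : (-Complex.I * (w:ℂ)) ≠ 0 := by
        simp [Complex.ext_iff, hw0.ne']
      rw [hg]
      simp only [map_mul, map_div₀, map_sub, map_one]
      rw [← Complex.exp_conj]
      simp only [map_mul, Complex.conj_I, Complex.conj_ofReal]
      rw [show -Complex.I * (w:ℂ) * (T:ℂ) = -(Complex.I * (w:ℂ) * (T:ℂ)) by ring]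
      congr 1
      rw [div_eq_div_iff hIw hIw']
      ring
    have hS : Rad D rr r0 k1 km1 T
        = ((4 * rr * D : ℝ) : ℂ) * (((∫ w in Set.Ioi (0:ℝ), g w).re : ℝ) : ℂ) := by
      rw [Rad, hconj, add_comm, Complex.add_conj]
      push_cast
      ring
    -- compute the real part of the integral
    have hre_int : (∫ w in Set.Ioi (0:ℝ), g w).re = A T + B T - Cint := by
      have hre : IntegrableOn (fun w : ℝ => (g w).re) (Set.Ioi 0) := by
        have := hgint.re
        simpa [RCLike.re_to_complex, IntegrableOn] using this
      set f2 : ℝ → ℝ := fun w => Real.cos (T*w)/w * (ψ w).im with hf2def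
      set f3 : ℝ → ℝ := fun w => (ψ w).im / w with hf3def
      have hf3 : IntegrableOn f3 (Set.Ioi 0) := h1
      have hmeas_psi_im : ContinuousOn (fun w : ℝ => (ψ w).im) (Set.Ioi 0) :=
        Complex.continuous_im.comp_continuousOn (psi_contOn hD hrr hr0 hk1)
      have hf2 : IntegrableOn f2 (Set.Ioi 0) := by
        apply Integrable.mono' hf3.norm
        · apply ContinuousOn.aestronglyMeasurable _ measurableSet_Ioi
          apply ContinuousOn.mul _ hmeas_psi_im
          exact ContinuousOn.div
            (Real.continuous_cos.comp (continuous_const.mul continuous_id)).continuousOn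
            continuousOn_id (fun w hw => ne_of_gt hw)
        · rw [ae_restrict_iff' measurableSet_Ioi]
          filter_upwards with w hw
          have hw0 : (0:ℝ) < w := hw
          simp only [hf2def, hf3def, Real.norm_eq_abs]
          rw [show Real.cos (T*w)/w * (ψ w).im = Real.cos (T*w) * ((ψ w).im / w) by ring,
            abs_mul]
          calc |Real.cos (T*w)| * |(ψ w).im / w| ≤ 1 * |(ψ w).im / w| := by
                gcongr; exact Real.abs_cos_le_one _
            _ = |(ψ w).im / w| := one_mul _
      set f1 : ℝ → ℝ := fun w => Real.sin (T*w)/w * (ψ w).re with hf1def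
      have heq : ∀ w ∈ Set.Ioi (0:ℝ), (g w).re = f1 w + f2 w - f3 w := by
        intro w hw
        have hw0 : (0:ℝ) < w := hw
        simp only [hg, hf1def, hf2def, hf3def]
        exact re_g_eq hw0.ne' (ψ w)
      have hf1 : IntegrableOn f1 (Set.Ioi 0) := by
        apply ((hre.sub hf2).add hf3).congr
        rw [eventuallyEq_iff_exists_mem]
        refine ⟨Set.Ioi 0, (ae_restrict_iff' measurableSet_Ioi).2 (ae_of_all _ fun w hw => hw),
          fun w hw => ?_⟩
        have := heq w hw
        simp only [Pi.add_apply, Pi.sub_apply]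
        linarith [this]
      have hri := integral_re (𝕜 := ℂ) hgint
      simp only [RCLike.re_to_complex] at hri
      rw [← hri]
      have hAT : A T = ∫ w in Set.Ioi (0:ℝ), f1 w := by
        have h := integral_comp_mul_left_Ioi (fun z => Real.sin z / z * (ψ (z/T)).re) 0 hT
        rw [mul_zero] at h
        have h2 : Set.EqOn (fun x : ℝ => Real.sin (T*x) / (T*x) * (ψ ((T*x)/T)).re)
            (fun x : ℝ => T⁻¹ * f1 x) (Set.Ioi 0) := by
          intro x hx
          have hx0 : (0:ℝ) < x := hx
          simp only [hf1def]
          rw [mul_div_cancel_left₀ x hT.ne']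
          ring
        rw [setIntegral_congr_fun measurableSet_Ioi h2, integral_const_mul, smul_eq_mul] at h
        have := mul_left_cancel₀ (inv_ne_zero hT.ne') h
        rw [hA]
        exact this.symm
      have hBT : B T = ∫ w in Set.Ioi (0:ℝ), f2 w := by
        have h := integral_comp_mul_left_Ioi (fun z => Real.cos z / z * (ψ (z/T)).im) 0 hT
        rw [mul_zero] at h
        have h2 : Set.EqOn (fun x : ℝ => Real.cos (T*x) / (T*x) * (ψ ((T*x)/T)).im)
            (fun x : ℝ => T⁻¹ * f2 x) (Set.Ioi 0) := by
          intro x hx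
          have hx0 : (0:ℝ) < x := hx
          simp only [hf2def]
          rw [mul_div_cancel_left₀ x hT.ne']
          ring
        rw [setIntegral_congr_fun measurableSet_Ioi h2, integral_const_mul, smul_eq_mul] at h
        have := mul_left_cancel₀ (inv_ne_zero hT.ne') h
        rw [hB]
        exact this.symm
      have hCT : Cint = ∫ w in Set.Ioi (0:ℝ), f3 w := by rw [hCint]
      have hf12 : IntegrableOn (fun w => f1 w + f2 w) (Set.Ioi 0) := hf1.add hf2
      rw [setIntegral_congr_fun measurableSet_Ioi heq,
        integral_sub hf12 hf3, integral_add hf1 hf2, hAT, hBT, hCT]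
    rw [hS, hre_int]
  -- assemble the limit
  have hlim : Tendsto (fun T : ℝ => A T + B T - Cint) atTop
      (nhds (Real.pi / 2 * (1 / (4 * Real.pi * r0 * D)) + 0 - Cint)) :=
    (h3sin.add h3cos).sub tendsto_const_nhds
  have hlim2 : Tendsto
      (fun T : ℝ => (Ntx : ℂ) * (((4 * rr * D : ℝ):ℂ) * ((A T + B T - Cint : ℝ):ℂ)))
      atTop (nhds ((Ntx : ℂ) * (((4 * rr * D : ℝ):ℂ) *
        ((Real.pi / 2 * (1 / (4 * Real.pi * r0 * D)) + 0 - Cint : ℝ):ℂ)))) := by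
    apply Tendsto.const_mul
    apply Tendsto.const_mul
    exact (Complex.continuous_ofReal.tendsto _).comp hlim
  have hval : (Ntx : ℂ) * (((4 * rr * D : ℝ):ℂ) *
      ((Real.pi / 2 * (1 / (4 * Real.pi * r0 * D)) + 0 - Cint : ℝ):ℂ))
      = (((Ntx : ℝ) * rr / (2 * r0) : ℝ) : ℂ) - ((4 * (Ntx : ℝ) * rr * D * Cint : ℝ) : ℂ) := by
    have hvalR : (Ntx:ℝ) * ((4*rr*D) * (Real.pi/2 * (1/(4*Real.pi*r0*D)) + 0 - Cint))
        = (Ntx:ℝ)*rr/(2*r0) - 4*(Ntx:ℝ)*rr*D*Cint := by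
      field_simp
      ring
    calc (Ntx : ℂ) * (((4 * rr * D : ℝ):ℂ) *
        ((Real.pi / 2 * (1 / (4 * Real.pi * r0 * D)) + 0 - Cint : ℝ):ℂ))
        = (((Ntx:ℝ) * ((4*rr*D) * (Real.pi/2 * (1/(4*Real.pi*r0*D)) + 0 - Cint)) : ℝ) : ℂ) := by
          push_cast; ring
      _ = (((Ntx : ℝ) * rr / (2 * r0) : ℝ) : ℂ) - ((4 * (Ntx : ℝ) * rr * D * Cint : ℝ) : ℂ) := by
          rw [hvalR]; push_cast; ring
  rw [hval] at hlim2
  apply Tendsto.congr' _ hlim2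
  filter_upwards [eventually_gt_atTop (0:ℝ)] with T hT
  rw [key T hT]
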